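/- arXiv:2003.01497 — 2 statements merged into one kernel-verified Lean document; each statement's English description precedes it below -/
import Mathlib

section
/- Let D be a symmetric probability measure on ℝ^{n×m}. Suppose the auction (g,p) satisfies the allocation constraints, IR, and DSIC, the total-payment map B ↦ Σ_{i=1}^n p(B)_i is measurable and D-integrable, and (g,p) maximizes the expected revenue E_{B∼D}[Σ_{i=1}^n p(B)_i] among all auctions with these properties. Then there exists an auction (g̃,p̃) satisfying the allocation constraints, IR, and DSIC, whose allocation and payment rules are both permutation-equivariant, and whose expected revenue E_{B∼D}[Σ_{i=1}^n p̃(B)_i] equals that of (g,p); i.e., the symmetric auction design problem admits a permutation-equivariant optimal solution. -/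
open BigOperators Finset MeasureTheory

namespace AuctionDesign

/-- Relabeled matrix: `(σ·B·τ) i j = B (σ⁻¹ i) (τ⁻¹ j)`. -/
def relabelM {n m : ℕ} (σ : Equiv.Perm (Fin n)) (τ : Equiv.Perm (Fin m))
    (B : Fin n → Fin m → ℝ) : Fin n → Fin m → ℝ :=
  fun i j => B (σ⁻¹ i) (τ⁻¹ j)

/-- Relabeled vector: `(σ·x) i = x (σ⁻¹ i)`. -/
def relabelV {n : ℕ} (σ : Equiv.Perm (Fin n)) (x : Fin n → ℝ) : Fin n → ℝ :=
  fun i => x (σ⁻¹ i)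

/-- Relabeled allocation rule `g^{σ,τ}(B) = σ⁻¹ · g(σ·B·τ) · τ⁻¹`. -/
def relabelAlloc {n m : ℕ} (g : (Fin n → Fin m → ℝ) → Fin n → Fin m → ℝ)
    (σ : Equiv.Perm (Fin n)) (τ : Equiv.Perm (Fin m)) :
    (Fin n → Fin m → ℝ) → Fin n → Fin m → ℝ :=
  fun B => relabelM σ⁻¹ τ⁻¹ (g (relabelM σ τ B))

/-- Relabeled payment rule `p^{σ,τ}(B) = σ⁻¹ · p(σ·B·τ)`. -/
def relabelPay {n m : ℕ} (p : (Fin n → Fin m → ℝ) → Fin n → ℝ)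
    (σ : Equiv.Perm (Fin n)) (τ : Equiv.Perm (Fin m)) :
    (Fin n → Fin m → ℝ) → Fin n → ℝ :=
  fun B => relabelV σ⁻¹ (p (relabelM σ τ B))

/-- Utility of bidder `i` with valuation row `v` at bid profile `B`. -/
def utility {n m : ℕ} (g : (Fin n → Fin m → ℝ) → Fin n → Fin m → ℝ)
    (p : (Fin n → Fin m → ℝ) → Fin n → ℝ)
    (i : Fin n) (v : Fin m → ℝ) (B : Fin n → Fin m → ℝ) : ℝ :=
  ∑ j, g B i j * v j - p B i

/-- Allocation constraints. -/
def AllocConstraints {n m : ℕ} (g : (Fin n → Fin m → ℝ) → Fin n → Fin m → ℝ) : Prop :=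
  (∀ B i j, 0 ≤ g B i j ∧ g B i j ≤ 1) ∧ ∀ B j, ∑ i, g B i j ≤ 1

/-- Nonnegative payments. -/
def NonnegPay {n m : ℕ} (p : (Fin n → Fin m → ℝ) → Fin n → ℝ) : Prop :=
  ∀ B i, 0 ≤ p B i

/-- Individual rationality. -/
def IR {n m : ℕ} (g : (Fin n → Fin m → ℝ) → Fin n → Fin m → ℝ)
    (p : (Fin n → Fin m → ℝ) → Fin n → ℝ) : Prop :=
  ∀ B i, p B i ≤ ∑ j, g B i j * B i j

/-- Dominant strategy incentive compatibility. -/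
def DSIC {n m : ℕ} (g : (Fin n → Fin m → ℝ) → Fin n → Fin m → ℝ)
    (p : (Fin n → Fin m → ℝ) → Fin n → ℝ) : Prop :=
  ∀ B (i : Fin n) (b' : Fin m → ℝ),
    utility g p i (B i) (Function.update B i b') ≤ utility g p i (B i) B

/-- Permutation-equivariance of an allocation rule. -/
def AllocEquivariant {n m : ℕ} (g : (Fin n → Fin m → ℝ) → Fin n → Fin m → ℝ) : Prop :=
  ∀ (σ : Equiv.Perm (Fin n)) (τ : Equiv.Perm (Fin m)) B,
    g (relabelM σ τ B) = relabelM σ τ (g B)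

/-- Permutation-equivariance of a payment rule. -/
def PayEquivariant {n m : ℕ} (p : (Fin n → Fin m → ℝ) → Fin n → ℝ) : Prop :=
  ∀ (σ : Equiv.Perm (Fin n)) (τ : Equiv.Perm (Fin m)) B,
    p (relabelM σ τ B) = relabelV σ (p B)

/-- A symmetric probability measure on bid matrices. -/
def SymmetricMeasure {n m : ℕ} (D : Measure (Fin n → Fin m → ℝ)) : Prop :=
  ∀ (σ : Equiv.Perm (Fin n)) (τ : Equiv.Perm (Fin m)),
    Measure.map (relabelM σ τ) D = D

lemma relabelM_comp {n m : ℕ} (σ σ' : Equiv.Perm (Fin n)) (τ τ' : Equiv.Perm (Fin m))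
    (B : Fin n → Fin m → ℝ) :
    relabelM σ τ (relabelM σ' τ' B) = relabelM (σ * σ') (τ * τ') B := by
  funext i j
  simp [relabelM, mul_inv_rev]

lemma relabelM_update {n m : ℕ} (σ : Equiv.Perm (Fin n)) (τ : Equiv.Perm (Fin m))
    (B : Fin n → Fin m → ℝ) (i : Fin n) (b' : Fin m → ℝ) :
    relabelM σ τ (Function.update B i b') =
      Function.update (relabelM σ τ B) (σ i) (fun j => b' (τ⁻¹ j)) := by
  funext i' j
  rcases eq_or_ne i' (σ i) with h | h
  · subst h; simp [relabelM, Function.update]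
  · have h2 : σ⁻¹ i' ≠ i := fun hh => h (by simp [← hh])
    simp [relabelM, Function.update, h, h2, show (Equiv.symm σ) i' ≠ i from h2]

lemma measurable_relabelM {n m : ℕ} (σ : Equiv.Perm (Fin n)) (τ : Equiv.Perm (Fin m)) :
    Measurable (relabelM (n := n) (m := m) σ τ) := by
  apply measurable_pi_lambda
  intro i
  apply measurable_pi_lambda
  intro j
  exact (measurable_pi_apply (τ⁻¹ j)).comp (measurable_pi_apply (σ⁻¹ i))

/-- the symmetric auction design problem admits a
permutation-equivariant optimal solution. -/
theorem exists_equivariant_optimal_auction {n m : ℕ} (hn : 0 < n) (hm : 0 < m)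
    (D : Measure (Fin n → Fin m → ℝ)) [IsProbabilityMeasure D]
    (hD : SymmetricMeasure D)
    (g : (Fin n → Fin m → ℝ) → Fin n → Fin m → ℝ)
    (p : (Fin n → Fin m → ℝ) → Fin n → ℝ)
    (hg : AllocConstraints g) (hp : NonnegPay p) (hIR : IR g p) (hDSIC : DSIC g p)
    (hmeas : Measurable fun B => ∑ i, p B i)
    (hint : Integrable (fun B => ∑ i, p B i) D)
    (hopt : ∀ (g' : (Fin n → Fin m → ℝ) → Fin n → Fin m → ℝ)
        (p' : (Fin n → Fin m → ℝ) → Fin n → ℝ),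
        AllocConstraints g' → NonnegPay p' → IR g' p' → DSIC g' p' →
        Measurable (fun B => ∑ i, p' B i) →
        Integrable (fun B => ∑ i, p' B i) D →
        ∫ B, (∑ i, p' B i) ∂D ≤ ∫ B, (∑ i, p B i) ∂D) :
    ∃ (gt : (Fin n → Fin m → ℝ) → Fin n → Fin m → ℝ)
      (pt : (Fin n → Fin m → ℝ) → Fin n → ℝ),
      AllocConstraints gt ∧ NonnegPay pt ∧ IR gt pt ∧ DSIC gt pt ∧
      AllocEquivariant gt ∧ PayEquivariant pt ∧
      ∫ B, (∑ i, pt B i) ∂D = ∫ B, (∑ i, p B i) ∂D := by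
  classical
  set K := Equiv.Perm (Fin n) × Equiv.Perm (Fin m) with hK
  set N : ℝ := (Fintype.card K : ℝ) with hNdef
  have hN : 0 < N := by
    rw [hNdef]
    exact_mod_cast Fintype.card_pos (α := K)
  set gt : (Fin n → Fin m → ℝ) → Fin n → Fin m → ℝ :=
    fun B i j => (∑ q : K, g (relabelM q.1 q.2 B) (q.1 i) (q.2 j)) / N with hgt
  set pt : (Fin n → Fin m → ℝ) → Fin n → ℝ :=
    fun B i => (∑ q : K, p (relabelM q.1 q.2 B) (q.1 i)) / N with hpt
  have hg01 := hg.1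
  have hgcol := hg.2
  -- utility formula for the symmetrized auction
  have hutil : ∀ (i : Fin n) (v : Fin m → ℝ) (C : Fin n → Fin m → ℝ),
      utility gt pt i v C =
        (∑ q : K, (∑ j, g (relabelM q.1 q.2 C) (q.1 i) (q.2 j) * v j
          - p (relabelM q.1 q.2 C) (q.1 i))) / N := by
    intro i v C
    unfold utility
    rw [Finset.sum_sub_distrib, sub_div]
    congr 1
    calc ∑ j, gt C i j * v j
        = ∑ j, (∑ q : K, g (relabelM q.1 q.2 C) (q.1 i) (q.2 j) * v j) / N := by
          refine Finset.sum_congr rfl fun j _ => ?_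
          simp only [hgt]
          rw [div_mul_eq_mul_div, Finset.sum_mul]
      _ = (∑ j, ∑ q : K, g (relabelM q.1 q.2 C) (q.1 i) (q.2 j) * v j) / N := by
          rw [Finset.sum_div]
      _ = _ := by rw [Finset.sum_comm]
  refine ⟨gt, pt, ⟨?_, ?_⟩, ?_, ?_, ?_, ?_, ?_, ?_⟩
  · -- 0 ≤ gt ≤ 1
    intro B i j
    simp only [hgt]
    constructor
    · apply div_nonneg _ hN.le
      exact Finset.sum_nonneg fun q _ => (hg01 _ _ _).1
    · rw [div_le_one hN, hNdef]
      calc ∑ q : K, g (relabelM q.1 q.2 B) (q.1 i) (q.2 j)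
          ≤ ∑ _q : K, (1 : ℝ) := Finset.sum_le_sum fun q _ => (hg01 _ _ _).2
        _ = (Fintype.card K : ℝ) := by simp
  · -- column sums ≤ 1
    intro B j
    simp only [hgt]
    rw [← Finset.sum_div, Finset.sum_comm, div_le_one hN, hNdef]
    calc ∑ q : K, ∑ i, g (relabelM q.1 q.2 B) (q.1 i) (q.2 j)
        ≤ ∑ _q : K, (1 : ℝ) := by
          apply Finset.sum_le_sum
          intro q _
          rw [Equiv.sum_comp q.1 (fun i' => g (relabelM q.1 q.2 B) i' (q.2 j))]
          exact hgcol _ _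
      _ = (Fintype.card K : ℝ) := by simp
  · -- NonnegPay
    intro B i
    simp only [hpt]
    apply div_nonneg _ hN.le
    exact Finset.sum_nonneg fun q _ => hp _ _
  · -- IR
    intro B i
    have hR : ∑ j, gt B i j * B i j
        = (∑ q : K, ∑ j, g (relabelM q.1 q.2 B) (q.1 i) (q.2 j) * B i j) / N := by
      calc ∑ j, gt B i j * B i j
          = ∑ j, (∑ q : K, g (relabelM q.1 q.2 B) (q.1 i) (q.2 j) * B i j) / N := by
            refine Finset.sum_congr rfl fun j _ => ?_
            simp only [hgt]
            rw [div_mul_eq_mul_div, Finset.sum_mul]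
        _ = (∑ j, ∑ q : K, g (relabelM q.1 q.2 B) (q.1 i) (q.2 j) * B i j) / N := by
            rw [Finset.sum_div]
        _ = _ := by rw [Finset.sum_comm]
    rw [hR]
    simp only [hpt]
    gcongr with q _
    calc p (relabelM q.1 q.2 B) (q.1 i)
        ≤ ∑ j', g (relabelM q.1 q.2 B) (q.1 i) j' * relabelM q.1 q.2 B (q.1 i) j' :=
          hIR _ _
      _ = ∑ j, g (relabelM q.1 q.2 B) (q.1 i) (q.2 j) * B i j := by
          rw [← Equiv.sum_comp q.2
            (fun j' => g (relabelM q.1 q.2 B) (q.1 i) j' * relabelM q.1 q.2 B (q.1 i) j')]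
          refine Finset.sum_congr rfl fun j _ => ?_
          simp [relabelM]
  · -- DSIC
    intro B i b'
    rw [hutil i (B i) (Function.update B i b'), hutil i (B i) B]
    apply div_le_div_of_nonneg_right ?_ hN.le
    refine Finset.sum_le_sum fun q _ => ?_
    have hrew : ∀ C', (∑ j, g C' (q.1 i) (q.2 j) * B i j) - p C' (q.1 i)
        = utility g p (q.1 i) (relabelM q.1 q.2 B (q.1 i)) C' := by
      intro C'
      unfold utility
      congr 1
      rw [← Equiv.sum_comp q.2
        (fun j' => g C' (q.1 i) j' * relabelM q.1 q.2 B (q.1 i) j')]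
      refine Finset.sum_congr rfl fun j _ => ?_
      simp [relabelM]
    rw [relabelM_update, hrew, hrew]
    exact hDSIC (relabelM q.1 q.2 B) (q.1 i) (fun j => b' (q.2⁻¹ j))
  · -- AllocEquivariant
    intro σ τ B
    funext i j
    show gt (relabelM σ τ B) i j = gt B (σ⁻¹ i) (τ⁻¹ j)
    simp only [hgt]
    congr 1
    apply Fintype.sum_equiv (Equiv.mulRight ((σ, τ) : K))
    intro q
    simp only [Equiv.coe_mulRight]
    rw [relabelM_comp]
    simp [Equiv.Perm.mul_apply]
  · -- PayEquivariant
    intro σ τ B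
    funext i
    show pt (relabelM σ τ B) i = pt B (σ⁻¹ i)
    simp only [hpt]
    congr 1
    apply Fintype.sum_equiv (Equiv.mulRight ((σ, τ) : K))
    intro q
    simp only [Equiv.coe_mulRight]
    rw [relabelM_comp]
    simp [Equiv.Perm.mul_apply]
  · -- revenue equality
    have hsum : ∀ B, ∑ i, pt B i
        = (∑ q : K, ∑ i', p (relabelM q.1 q.2 B) i') / N := by
      intro B
      simp only [hpt]
      rw [← Finset.sum_div, Finset.sum_comm]
      congr 1
      refine Finset.sum_congr rfl fun q _ => ?_
      exact Equiv.sum_comp q.1 (fun i' => p (relabelM q.1 q.2 B) i')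
    have hif : ∀ q : K, Integrable (fun B => ∑ i, p (relabelM q.1 q.2 B) i) D := by
      intro q
      have h1 : Integrable (fun B => ∑ i, p B i)
          (Measure.map (relabelM q.1 q.2) D) := by
        rw [hD q.1 q.2]; exact hint
      exact (integrable_map_measure hmeas.aestronglyMeasurable
        (measurable_relabelM q.1 q.2).aemeasurable).mp h1
    have hieq : ∀ q : K, ∫ B, (∑ i, p (relabelM q.1 q.2 B) i) ∂D
        = ∫ B, ∑ i, p B i ∂D := by
      intro q
      rw [← MeasureTheory.integral_map (measurable_relabelM q.1 q.2).aemeasurable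
        hmeas.aestronglyMeasurable, hD q.1 q.2]
    calc ∫ B, (∑ i, pt B i) ∂D
        = ∫ B, (∑ q : K, ∑ i, p (relabelM q.1 q.2 B) i) / N ∂D := by
          simp only [hsum]
      _ = (∫ B, (∑ q : K, ∑ i, p (relabelM q.1 q.2 B) i) ∂D) / N := by
          rw [integral_div]
      _ = (∑ q : K, ∫ B, (∑ i, p (relabelM q.1 q.2 B) i) ∂D) / N := by
          rw [integral_finset_sum _ fun q _ => hif q]
      _ = (∑ _q : K, ∫ B, (∑ i, p B i) ∂D) / N := by
          rw [Finset.sum_congr rfl fun q _ => hieq q]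
      _ = ∫ B, (∑ i, p B i) ∂D := by
          rw [Finset.sum_const, Finset.card_univ, nsmul_eq_mul, hNdef]
          exact mul_div_cancel_left₀ _
            (Nat.cast_ne_zero.mpr Fintype.card_ne_zero)
end AuctionDesign
end

section
/- Let D be a symmetric probability measure on ℝ^{n×m} and let p : ℝ^{n×m} → ℝ^n be a payment rule such that B ↦ Σ_{i=1}^n p(B)_i is measurable and D-integrable. Then the symmetrized payment rule p̃(B) = (1/(n!·m!)) Σ_{σ ∈ S_n} Σ_{τ ∈ S_m} p^{σ,τ}(B) achieves the same expected revenue as p: ∫ Σ_{i=1}^n p̃(B)_i dD(B) = ∫ Σ_{i=1}^n p(B)_i dD(B). -/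
open BigOperators Finset MeasureTheory

namespace AuctionDesign

/-- under a symmetric measure, the symmetrized payment rule has
the same expected revenue as the original one. -/
theorem symmetrized_expected_revenue {n m : ℕ} (hn : 0 < n) (hm : 0 < m)
    (D : Measure (Fin n → Fin m → ℝ)) [IsProbabilityMeasure D]
    (hD : SymmetricMeasure D)
    (p : (Fin n → Fin m → ℝ) → Fin n → ℝ)
    (hmeas : Measurable fun B => ∑ i, p B i)
    (hint : Integrable (fun B => ∑ i, p B i) D)
    (pt : (Fin n → Fin m → ℝ) → Fin n → ℝ)
    (hpt : ∀ B, pt B = (1 / ((Nat.factorial n : ℝ) * (Nat.factorial m : ℝ))) •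
      ∑ σ : Equiv.Perm (Fin n), ∑ τ : Equiv.Perm (Fin m), relabelPay p σ τ B) :
    ∫ B, (∑ i, pt B i) ∂D = ∫ B, (∑ i, p B i) ∂D := by
  have hmeasR : ∀ (σ : Equiv.Perm (Fin n)) (τ : Equiv.Perm (Fin m)),
      Measurable (relabelM σ τ (n := n) (m := m)) := by
    intro σ τ
    apply measurable_pi_lambda
    intro i
    apply measurable_pi_lambda
    intro j
    exact (measurable_pi_apply _).comp (measurable_pi_apply _)
  have hmp : ∀ (σ : Equiv.Perm (Fin n)) (τ : Equiv.Perm (Fin m)),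
      MeasurePreserving (relabelM σ τ) D D := fun σ τ => ⟨hmeasR σ τ, hD σ τ⟩
  -- integrability of each relabeled summand
  have hintστ : ∀ (σ : Equiv.Perm (Fin n)) (τ : Equiv.Perm (Fin m)),
      Integrable (fun B => ∑ i, p (relabelM σ τ B) i) D :=
    fun σ τ => ((hmp σ τ).integrable_comp hint.1).mpr hint
  have key : ∀ (σ : Equiv.Perm (Fin n)) (τ : Equiv.Perm (Fin m)),
      ∫ B, (∑ i, p (relabelM σ τ B) i) ∂D = ∫ B, (∑ i, p B i) ∂D := by
    intro σ τ
    conv_rhs => rw [← hD σ τ]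
    exact (integral_map (hmeasR σ τ).aemeasurable ((hD σ τ).symm ▸ hint.1)).symm
  set c : ℝ := 1 / ((Nat.factorial n : ℝ) * (Nat.factorial m : ℝ)) with hc
  have hsum : ∀ B, (∑ i, pt B i) =
      c * ∑ σ : Equiv.Perm (Fin n), ∑ τ : Equiv.Perm (Fin m),
        (∑ i, p (relabelM σ τ B) i) := by
    intro B
    rw [show (∑ i, pt B i) = ∑ i, (c • ∑ σ : Equiv.Perm (Fin n),
        ∑ τ : Equiv.Perm (Fin m), relabelPay p σ τ B) i from by rw [hpt B]]
    simp only [Pi.smul_apply, Finset.sum_apply, smul_eq_mul, ← Finset.mul_sum]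
    congr 1
    rw [Finset.sum_comm]
    congr 1
    ext σ
    rw [Finset.sum_comm]
    congr 1
    ext τ
    simp only [relabelPay, relabelV, inv_inv]
    exact (Equiv.sum_comp σ (fun i => p (relabelM σ τ B) i))
  calc ∫ B, (∑ i, pt B i) ∂D
      = ∫ B, c * ∑ σ : Equiv.Perm (Fin n), ∑ τ : Equiv.Perm (Fin m),
          (∑ i, p (relabelM σ τ B) i) ∂D := by
        exact integral_congr_ae (Filter.Eventually.of_forall hsum)
    _ = c * ∫ B, ∑ σ : Equiv.Perm (Fin n), ∑ τ : Equiv.Perm (Fin m),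
          (∑ i, p (relabelM σ τ B) i) ∂D := integral_const_mul c _
    _ = c * ∑ σ : Equiv.Perm (Fin n), ∑ τ : Equiv.Perm (Fin m),
          ∫ B, (∑ i, p (relabelM σ τ B) i) ∂D := by
        rw [integral_finset_sum _ (fun σ _ => integrable_finset_sum _
          (fun τ _ => hintστ σ τ))]
        congr 1
        exact Finset.sum_congr rfl fun σ _ =>
          integral_finset_sum _ (fun τ _ => hintστ σ τ)
    _ = c * ∑ σ : Equiv.Perm (Fin n), ∑ τ : Equiv.Perm (Fin m),
          ∫ B, (∑ i, p B i) ∂D := by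
        congr 1
        exact Finset.sum_congr rfl fun σ _ => Finset.sum_congr rfl fun τ _ => key σ τ
    _ = ∫ B, (∑ i, p B i) ∂D := by
        simp only [Finset.sum_const, Finset.card_univ, Fintype.card_perm, Fintype.card_fin, nsmul_eq_mul]
        rw [hc]
        field_simp
end AuctionDesign
end
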